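/- Let G be a finite connected graph, let l be an integer with 2^l ≤ |V(G)| < 2^{l+1}, and define M_i(v), m_i(v) for i ∈ {1, …, l}, v ∈ V(G) as the max of |E(G|_X)| + |∂_G X| and the min of |∂_G X|, respectively, over X ∈ 𝒞(G) with v ∈ X and ⌊|V(G)|/2^{i+1}⌋ < |X| ≤ ⌊|V(G)|/2^i⌋. Suppose the vertices a, b ∈ V(G) are such that (whenever defined) M_{l−i}(v) ≤ C·2^i and m_{l−i}(v) ≥ c·2^{((d−1)/d) i} for all 1 ≤ i ≤ l and v ∈ {a, b}, where d ≥ 2 is an integer and C, c > 0. Then there exists c' = c'(d, C, c) > 0 such that inf{Σ_{e ∈ E(G)} (∇_e φ)² : φ : V(G) → ℝ, φ(a) − φ(b) = 1} ≥ c'/l if d = 2, and ≥ c' if d ≥ 3. -/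

import Mathlib

open Classical in
/-- `|∂_G X|`: the number of edges of `G` with exactly one endpoint in `X`. -/
noncomputable def bdryCard {V : Type*} [Fintype V] (G : SimpleGraph V)
    (X : Finset V) : ℕ :=
  (Finset.univ.filter fun p : V × V => G.Adj p.1 p.2 ∧ p.1 ∈ X ∧ p.2 ∉ X).card

open Classical in
/-- `|E(G|_X)|`: the number of edges of `G` with both endpoints in `X`. -/
noncomputable def inEdgesCard {V : Type*} [Fintype V] (G : SimpleGraph V)
    (X : Finset V) : ℕ :=
  (Finset.univ.filter fun p : V × V => G.Adj p.1 p.2 ∧ p.1 ∈ X ∧ p.2 ∈ X).card / 2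

/-- `X ∈ 𝒞(G)`. -/
def memC {V : Type*} [Fintype V] (G : SimpleGraph V) (X : Finset V) : Prop :=
  X.Nonempty ∧ X ≠ Finset.univ ∧
    (SimpleGraph.induce (X : Set V) G).Connected ∧
    (SimpleGraph.induce ((X : Set V)ᶜ) G).Connected

/-- Sets over which `M_i(v)`, `m_i(v)` are defined. -/
def scaleFamily {V : Type*} [Fintype V] (G : SimpleGraph V) (v : V) (i : ℕ) :
    Set (Finset V) :=
  {X | memC G X ∧ v ∈ X ∧
    Fintype.card V / 2 ^ (i + 1) < X.card ∧ X.card ≤ Fintype.card V / 2 ^ i}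

/-- `M_i(v)`. -/
noncomputable def Mscale {V : Type*} [Fintype V] (G : SimpleGraph V)
    (v : V) (i : ℕ) : ℕ :=
  sSup ((fun X => inEdgesCard G X + bdryCard G X) '' scaleFamily G v i)

/-- `m_i(v)`. -/
noncomputable def mscale {V : Type*} [Fintype V] (G : SimpleGraph V)
    (v : V) (i : ℕ) : ℕ :=
  sInf ((fun X => bdryCard G X) '' scaleFamily G v i)

open Classical in
/-- `∑_{e ∈ E(G)} (∇_e φ)²` (half the sum over ordered adjacent pairs). -/
noncomputable def dirichletEnergy {V : Type*} [Fintype V] (G : SimpleGraph V)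
    (φ : V → ℝ) : ℝ :=
  (1/2) * ∑ u : V, ∑ w : V, if G.Adj u w then (φ u - φ w) ^ 2 else 0


open Finset SimpleGraph

set_option linter.unusedSectionVars false
variable {V : Type} [Fintype V] {G : SimpleGraph V}

/-- Vertices reachable from `x₀` by a walk staying inside `S`. -/
def reachSet (G : SimpleGraph V) (S : Set V) (x₀ : V) : Set V :=
  {x | ∃ w : G.Walk x₀ x, ∀ y ∈ w.support, y ∈ S}

lemma reachSet_self {S : Set V} {x₀ : V} (h : x₀ ∈ S) : x₀ ∈ reachSet G S x₀ :=
  ⟨SimpleGraph.Walk.nil, by simp [h]⟩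

lemma reachSet_subset {S : Set V} {x₀ : V} : reachSet G S x₀ ⊆ S := by
  rintro x ⟨w, hw⟩
  exact hw x w.end_mem_support

lemma reachSet_mono {S T : Set V} {x₀ : V} (h : S ⊆ T) :
    reachSet G S x₀ ⊆ reachSet G T x₀ := by
  rintro x ⟨w, hw⟩
  exact ⟨w, fun y hy => h (hw y hy)⟩

lemma reachSet_adj {S : Set V} {x₀ x y : V} (hx : x ∈ reachSet G S x₀)
    (hxy : G.Adj x y) (hy : y ∈ S) : y ∈ reachSet G S x₀ := by
  obtain ⟨w, hw⟩ := hx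
  refine ⟨w.concat hxy, ?_⟩
  intro z hz
  rw [SimpleGraph.Walk.support_concat, List.mem_append] at hz
  rcases hz with hz | hz
  · exact hw z hz
  · simp at hz; subst hz; exact hy

lemma reachSet_walk {S : Set V} {x₀ x : V} (hx : x ∈ reachSet G S x₀) :
    ∃ w : G.Walk x₀ x, ∀ y ∈ w.support, y ∈ reachSet G S x₀ := by
  classical
  obtain ⟨w, hw⟩ := hx
  refine ⟨w, fun y hy => ?_⟩
  exact ⟨w.takeUntil y hy, fun z hz => hw z (SimpleGraph.Walk.support_takeUntil_subset w hy hz)⟩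

/-- If every point of `T` is joined to `x₀` by a walk inside `T`, the induced graph is
connected. -/
lemma induce_connected_of_walks {T : Set V} {x₀ : V} (hx₀ : x₀ ∈ T)
    (h : ∀ x ∈ T, ∃ w : G.Walk x₀ x, ∀ y ∈ w.support, y ∈ T) :
    (SimpleGraph.induce T G).Connected := by
  have key : ∀ (x y : V) (w : G.Walk x y) (hw : ∀ z ∈ w.support, z ∈ T),
      (SimpleGraph.induce T G).Reachable ⟨x, hw x w.start_mem_support⟩ ⟨y, hw y w.end_mem_support⟩ := by
    intro x y w
    induction w with
    | nil => intro hw; rfl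
    | @cons u v z huv w ih =>
        intro hw
        have hv : ∀ q ∈ w.support, q ∈ T := fun q hq => hw q (by simp [SimpleGraph.Walk.support_cons, hq])
        have h1 : (SimpleGraph.induce T G).Adj ⟨u, hw u (SimpleGraph.Walk.start_mem_support _)⟩
            ⟨v, hv v w.start_mem_support⟩ := huv
        exact (h1.reachable).trans (ih hv)
  have : Nonempty T := ⟨⟨x₀, hx₀⟩⟩
  refine ⟨fun x y => ?_⟩
  obtain ⟨x, hx⟩ := x
  obtain ⟨y, hy⟩ := y
  obtain ⟨wx, hwx⟩ := h x hx
  obtain ⟨wy, hwy⟩ := h y hy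
  exact (key x₀ x wx hwx).symm.trans (key x₀ y wy hwy)

section fill
variable (G)

def fillA (S : Set V) (aa : V) : Set V := reachSet G S aa
def fillB (S : Set V) (aa bb : V) : Set V := reachSet G (fillA G S aa)ᶜ bb
def fillX (S : Set V) (aa bb : V) : Set V := (fillB G S aa bb)ᶜ

variable {G}
variable {S : Set V} {aa bb : V}

lemma fillA_subset_fillX : fillA G S aa ⊆ fillX G S aa bb :=
  fun _ hz hzB => (reachSet_subset hzB) hz

lemma aa_mem_fillX (ha : aa ∈ S) : aa ∈ fillX G S aa bb :=
  fillA_subset_fillX (reachSet_self ha)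

lemma bb_mem_fillB (ha : aa ∈ S) (hb : bb ∉ S) : bb ∈ fillB G S aa bb :=
  reachSet_self (fun hbA => hb (reachSet_subset hbA))

lemma bb_not_mem_fillX (ha : aa ∈ S) (hb : bb ∉ S) : bb ∉ fillX G S aa bb :=
  fun h => h (bb_mem_fillB ha hb)

lemma fillX_mono {S' : Set V} (h : S ⊆ S') : fillX G S aa bb ⊆ fillX G S' aa bb := by
  intro x hx hxB'
  exact hx (reachSet_mono (Set.compl_subset_compl.2 (reachSet_mono h)) hxB')

/-- orientation of boundary edges of the filled set -/
lemma fillX_bdry (hxy : G.Adj x y) (hx : x ∈ fillX G S aa bb) (hy : y ∉ fillX G S aa bb) :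
    x ∈ S ∧ y ∉ S := by
  have hyB : y ∈ fillB G S aa bb := not_not.mp hy
  have hxA : x ∈ fillA G S aa := by
    by_contra hxA
    exact hx (reachSet_adj hyB hxy.symm hxA)
  refine ⟨reachSet_subset hxA, fun hyS => ?_⟩
  exact (reachSet_subset hyB) (reachSet_adj hxA hxy hyS)

lemma fillX_walks (hG : G.Connected) (ha : aa ∈ S) :
    ∀ x ∈ fillX G S aa bb, ∃ w : G.Walk aa x, ∀ y ∈ w.support, y ∈ fillX G S aa bb := by
  have key : ∀ {x z : V} (_ : G.Walk x z), aa = z → x ∈ fillX G S aa bb →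
      ∃ w : G.Walk x aa, ∀ y ∈ w.support, y ∈ fillX G S aa bb := by
    intro x z W
    induction W with
    | nil =>
        rintro rfl _
        exact ⟨SimpleGraph.Walk.nil, by simp [aa_mem_fillX ha]⟩
    | @cons u v zz huv p ih =>
        rintro rfl hu
        by_cases hA : u ∈ fillA G S aa
        · obtain ⟨w, hw⟩ := reachSet_walk hA
          refine ⟨w.reverse, ?_⟩
          intro y hy
          rw [SimpleGraph.Walk.support_reverse, List.mem_reverse] at hy
          exact fillA_subset_fillX (hw y hy)
        · have hv : v ∈ fillX G S aa bb := by
            intro hvB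
            exact hu (reachSet_adj hvB huv.symm hA)
          obtain ⟨w, hw⟩ := ih rfl hv
          refine ⟨SimpleGraph.Walk.cons huv w, ?_⟩
          intro y hy
          rw [SimpleGraph.Walk.support_cons, List.mem_cons] at hy
          rcases hy with rfl | hy
          · exact hu
          · exact hw y hy
  intro x hx
  obtain ⟨W⟩ := hG.preconnected x aa
  obtain ⟨w, hw⟩ := key W rfl hx
  refine ⟨w.reverse, ?_⟩
  intro y hy
  rw [SimpleGraph.Walk.support_reverse, List.mem_reverse] at hy
  exact hw y hy

lemma fillX_connected (hG : G.Connected) (ha : aa ∈ S) :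
    (SimpleGraph.induce (fillX G S aa bb) G).Connected :=
  induce_connected_of_walks (aa_mem_fillX ha) (fillX_walks hG ha)

lemma fillX_compl_connected (ha : aa ∈ S) (hb : bb ∉ S) :
    (SimpleGraph.induce (fillX G S aa bb)ᶜ G).Connected := by
  rw [show (fillX G S aa bb)ᶜ = fillB G S aa bb from compl_compl _]
  exact induce_connected_of_walks (bb_mem_fillB ha hb) (fun x hx => reachSet_walk hx)

end fill

open Classical in
noncomputable def vals (φ : V → ℝ) (a b : V) : Finset ℝ :=
  (Finset.univ.image φ).filter (fun x => φ b ≤ x ∧ x ≤ φ a)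

open Classical in
noncomputable def vIdx (φ : V → ℝ) (a b : V) (k : ℕ) : ℝ :=
  if h : (vals φ a b).card = 0 then 0
  else ((vals φ a b).orderIsoOfFin rfl) ⟨min k ((vals φ a b).card - 1), by omega⟩

section vIdx
variable {φ : V → ℝ} {a b : V}

lemma phib_mem_vals (hab : φ b ≤ φ a) : φ b ∈ vals φ a b := by
  classical
  simp only [vals, mem_filter, mem_image]
  exact ⟨⟨b, mem_univ b, rfl⟩, le_refl _, hab⟩

lemma phia_mem_vals (hab : φ b ≤ φ a) : φ a ∈ vals φ a b := by
  classical
  simp only [vals, mem_filter, mem_image]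
  exact ⟨⟨a, mem_univ a, rfl⟩, hab, le_refl _⟩

lemma vals_card_ne (hab : φ b ≤ φ a) : (vals φ a b).card ≠ 0 :=
  Finset.card_ne_zero_of_mem (phib_mem_vals hab)

lemma vIdx_mem (hab : φ b ≤ φ a) (k : ℕ) : vIdx φ a b k ∈ vals φ a b := by
  rw [vIdx, dif_neg (vals_card_ne hab)]
  exact Subtype.mem _

lemma vIdx_mono (hab : φ b ≤ φ a) : Monotone (vIdx φ a b) := by
  intro k k' hkk
  rw [vIdx, vIdx, dif_neg (vals_card_ne hab), dif_neg (vals_card_ne hab)]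
  have : (⟨min k ((vals φ a b).card - 1), by have := vals_card_ne hab; omega⟩ : Fin (vals φ a b).card)
      ≤ ⟨min k' ((vals φ a b).card - 1), by have := vals_card_ne hab; omega⟩ := by
    simp only [Fin.mk_le_mk]
    omega
  exact_mod_cast (((vals φ a b).orderIsoOfFin rfl).le_iff_le.2 this)

lemma vIdx_strict (hab : φ b ≤ φ a) {k k' : ℕ} (h : k < k')
    (h' : k' ≤ (vals φ a b).card - 1) : vIdx φ a b k < vIdx φ a b k' := by
  rw [vIdx, vIdx, dif_neg (vals_card_ne hab), dif_neg (vals_card_ne hab)]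
  have : (⟨min k ((vals φ a b).card - 1), by have := vals_card_ne hab; omega⟩ : Fin (vals φ a b).card)
      < ⟨min k' ((vals φ a b).card - 1), by have := vals_card_ne hab; omega⟩ := by
    simp only [Fin.mk_lt_mk]
    omega
  exact_mod_cast (((vals φ a b).orderIsoOfFin rfl).lt_iff_lt.2 this)

lemma vIdx_exists (hab : φ b ≤ φ a) {x : ℝ} (hx : x ∈ vals φ a b) :
    ∃ j ≤ (vals φ a b).card - 1, vIdx φ a b j = x := by
  have hcard := vals_card_ne hab
  obtain ⟨j, hj⟩ := ((vals φ a b).orderIsoOfFin rfl).surjective ⟨x, hx⟩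
  refine ⟨j.1, by omega, ?_⟩
  rw [vIdx, dif_neg hcard]
  have : min j.1 ((vals φ a b).card - 1) = j.1 := by omega
  simp only [this]
  rw [show (⟨j.1, by omega⟩ : Fin (vals φ a b).card) = j from rfl, hj]

lemma vIdx_zero (hab : φ b ≤ φ a) : vIdx φ a b 0 = φ b := by
  have h1 : φ b ≤ vIdx φ a b 0 := by
    have := vIdx_mem hab 0
    simp only [vals, mem_filter] at this
    exact this.2.1
  obtain ⟨j, hj, hjx⟩ := vIdx_exists hab (phib_mem_vals hab)
  exact le_antisymm (hjx ▸ vIdx_mono hab (Nat.zero_le j)) h1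

lemma vIdx_last (hab : φ b ≤ φ a) : vIdx φ a b ((vals φ a b).card - 1) = φ a := by
  have h1 : vIdx φ a b ((vals φ a b).card - 1) ≤ φ a := by
    have := vIdx_mem hab ((vals φ a b).card - 1)
    simp only [vals, mem_filter] at this
    exact this.2.2
  obtain ⟨j, hj, hjx⟩ := vIdx_exists hab (phia_mem_vals hab)
  exact le_antisymm h1 (hjx ▸ vIdx_mono hab hj)

lemma vIdx_le_phia (hab : φ b ≤ φ a) (k : ℕ) : vIdx φ a b k ≤ φ a := by
  have := vIdx_mem hab k
  simp only [vals, mem_filter] at this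
  exact this.2.2

lemma vIdx_mem_range (hab : φ b ≤ φ a) (k : ℕ) : ∃ y : V, φ y = vIdx φ a b k := by
  have := vIdx_mem hab k
  simp only [vals, mem_filter, mem_image] at this
  obtain ⟨⟨y, _, hy⟩, _⟩ := this
  exact ⟨y, hy⟩

/-- The clamped telescoping ("coarea") estimate. -/
lemma coarea (hab : φ b ≤ φ a) {r s : ℝ} (hs : ∃ y : V, φ y = s)
    {K : Finset ℕ} (hK : K ⊆ Finset.range ((vals φ a b).card - 1))
    (hKrs : ∀ k ∈ K, s < vIdx φ a b (k + 1) ∧ vIdx φ a b (k + 1) ≤ r) :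
    ∑ k ∈ K, (vIdx φ a b (k + 1) - vIdx φ a b k) ≤ max (r - s) 0 := by
  classical
  set m := (vals φ a b).card - 1 with hm
  set c₂ := max s (φ b) with hc₂
  set w : ℕ → ℝ := fun k => max c₂ (min (vIdx φ a b k) r) with hw
  have hwmono : Monotone w := fun x y hxy =>
    max_le_max (le_refl _) (min_le_min (vIdx_mono hab hxy) (le_refl _))
  have hstep : ∀ k ∈ K, vIdx φ a b (k + 1) - vIdx φ a b k ≤ w (k + 1) - w k := by
    intro k hk
    obtain ⟨hs1, hr1⟩ := hKrs k hk
    have hb1 : φ b ≤ vIdx φ a b (k+1) := (vIdx_zero hab) ▸ vIdx_mono hab (Nat.zero_le _)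
    have hwk1 : w (k + 1) = vIdx φ a b (k + 1) := by
      rw [hw]
      simp only
      rw [min_eq_left hr1, max_eq_right (max_le (le_of_lt hs1) hb1)]
    have hsvk : c₂ ≤ vIdx φ a b k := by
      rcases le_or_gt (φ b) s with hbs | hbs
      · -- s is a value in the window, so s = v j with j ≤ k
        have hsa : s ≤ φ a := le_trans (le_of_lt hs1) (vIdx_le_phia hab _)
        have hsmem : s ∈ vals φ a b := by
          obtain ⟨y, hy⟩ := hs
          simp only [vals, mem_filter, mem_image]
          exact ⟨⟨y, mem_univ y, hy⟩, hbs, hsa⟩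
        obtain ⟨j, hj, hjs⟩ := vIdx_exists hab hsmem
        have hjk : j ≤ k := by
          by_contra hcon
          have h5 : vIdx φ a b (k+1) ≤ vIdx φ a b j := vIdx_mono hab (by omega)
          rw [hjs] at h5
          exact absurd h5 (not_le.2 hs1)
        have h6 : vIdx φ a b j ≤ vIdx φ a b k := vIdx_mono hab hjk
        rw [hjs] at h6
        have hb0 : φ b ≤ vIdx φ a b k := (vIdx_zero hab) ▸ vIdx_mono hab (Nat.zero_le _)
        exact max_le h6 hb0
      · have hb0 : φ b ≤ vIdx φ a b k := (vIdx_zero hab) ▸ vIdx_mono hab (Nat.zero_le _)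
        exact max_le (le_trans (le_of_lt hbs) hb0) hb0
    have hwk : w k = vIdx φ a b k := by
      rw [hw]
      simp only
      rw [min_eq_left (le_trans (vIdx_mono hab (Nat.le_succ k)) hr1), max_eq_right hsvk]
    rw [hwk1, hwk]
  calc ∑ k ∈ K, (vIdx φ a b (k + 1) - vIdx φ a b k) ≤ ∑ k ∈ K, (w (k + 1) - w k) :=
        Finset.sum_le_sum hstep
    _ ≤ ∑ k ∈ Finset.range m, (w (k + 1) - w k) := by
        refine Finset.sum_le_sum_of_subset_of_nonneg hK ?_
        intro k _ _
        simp only [sub_nonneg]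
        exact hwmono (Nat.le_succ k)
    _ = w m - w 0 := Finset.sum_range_sub w m
    _ ≤ max (r - s) 0 := by
        have hw0 : w 0 = c₂ := by
          rw [hw]
          simp only
          rw [vIdx_zero hab]
          exact max_eq_left (le_trans (min_le_left _ _) (le_max_right s (φ b)))
        rw [hw0, hw]
        simp only
        have h1 : c₂ ≤ c₂ + max (r - s) 0 := by simp [le_max_right]
        have h2 : min (vIdx φ a b m) r ≤ c₂ + max (r - s) 0 := by
          have hrs : r - s ≤ max (r - s) 0 := le_max_left _ _
          have hsc : s ≤ c₂ := le_max_left _ _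
          linarith [min_le_right (vIdx φ a b m) r]
        linarith [max_le h1 h2]
end vIdx


lemma geom_aux {t : ℝ} (h0 : 0 ≤ t) (h1 : t < 1) (n : ℕ) :
    ∑ i ∈ Finset.range n, t^(i+1) ≤ t/(1-t) := by
  have ht1 : (0:ℝ) < 1 - t := by linarith
  have hgs : ∑ i ∈ Finset.range n, t^i = (1 - t^n)/(1-t) := by
    rw [geom_sum_eq (by linarith : t ≠ 1) n]
    rw [div_eq_div_iff (by linarith) (by linarith)]
    ring
  have h2 : ∑ i ∈ Finset.range n, t^(i+1) = t * ∑ i ∈ Finset.range n, t^i := by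
    rw [Finset.mul_sum]
    exact Finset.sum_congr rfl fun i _ => by ring
  rw [h2, hgs]
  have hpn : 0 ≤ t^n := pow_nonneg h0 n
  have h3 : t * ((1 - t^n)/(1-t)) = (t * (1 - t^n))/(1-t) := by ring
  rw [h3, div_le_div_iff₀ ht1 ht1]
  nlinarith [mul_nonneg (mul_nonneg h0 ht1.le) hpn]

-- ===== construction =====
section core
variable (G)

noncomputable def Sset (φ : V → ℝ) (a b : V) (k : ℕ) : Set V :=
  {x | vIdx φ a b (k+1) ≤ φ x}

noncomputable def Xset (φ : V → ℝ) (a b : V) (k : ℕ) : Set V :=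
  fillX G (Sset φ a b k) a b

open Classical in
noncomputable def XFin (φ : V → ℝ) (a b : V) (k : ℕ) : Finset V :=
  Finset.univ.filter (· ∈ Xset G φ a b k)

open Classical in
noncomputable def clsIdx (φ : V → ℝ) (a b : V) (l k : ℕ) : ℕ :=
  Nat.findGreatest (fun j => (XFin G φ a b k).card ≤ Fintype.card V / 2 ^ j) l

open Classical in
noncomputable def BdP (φ : V → ℝ) (a b : V) (k : ℕ) : Finset (V × V) :=
  Finset.univ.filter (fun p => G.Adj p.1 p.2 ∧ p.1 ∈ Xset G φ a b k ∧ p.2 ∉ Xset G φ a b k)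

open Classical in
noncomputable def adjP : Finset (V × V) := Finset.univ.filter (fun p => G.Adj p.1 p.2)

noncomputable def lamk (φ : V → ℝ) (a b : V) (k : ℕ) : ℝ :=
  vIdx φ a b (k+1) - vIdx φ a b k

noncomputable def Kfib (φ : V → ℝ) (a b : V) (l j : ℕ) : Finset ℕ :=
  (Finset.range ((vals φ a b).card - 1)).filter (fun k => clsIdx G φ a b l k = j)

noncomputable def dlt (φ : V → ℝ) (a b : V) (l j : ℕ) : ℝ :=
  ∑ k ∈ Kfib G φ a b l j, lamk φ a b k

open Classical in
noncomputable def ell (φ : V → ℝ) (a b : V) (l j : ℕ) (p : V × V) : ℝ :=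
  ∑ k ∈ Kfib G φ a b l j, if p ∈ BdP G φ a b k then lamk φ a b k else 0

noncomputable def Asum (φ : V → ℝ) (a b : V) (l j : ℕ) : ℝ :=
  ∑ p ∈ adjP G, (ell G φ a b l j p)^2

variable {G}

lemma mem_XFin {φ : V → ℝ} {a b : V} {k : ℕ} {x : V} :
    x ∈ XFin G φ a b k ↔ x ∈ Xset G φ a b k := by
  classical
  simp [XFin]

lemma coe_XFin {φ : V → ℝ} {a b : V} {k : ℕ} :
    ((XFin G φ a b k : Finset V) : Set V) = Xset G φ a b k := by
  ext x; simp [mem_XFin]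

lemma sum_pairs_eq (φ : V → ℝ) :
    ∑ p ∈ adjP G, (φ p.1 - φ p.2)^2 = 2 * dirichletEnergy G φ := by
  classical
  rw [dirichletEnergy, ← Fintype.sum_prod_type', adjP, Finset.sum_filter]
  ring

lemma dirichletEnergy_nonneg (φ : V → ℝ) : 0 ≤ dirichletEnergy G φ := by
  classical
  rw [dirichletEnergy]
  apply mul_nonneg (by norm_num)
  apply Finset.sum_nonneg
  intro u _
  apply Finset.sum_nonneg
  intro w _
  by_cases h : G.Adj u w
  · rw [if_pos h]; positivity
  · rw [if_neg h]


lemma energy_core {G : SimpleGraph V} (hG : G.Connected)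
    (l : ℕ) (hl : 1 ≤ l) (hn1 : 2 ^ l ≤ Fintype.card V) (hn2 : Fintype.card V < 2 ^ (l + 1))
    {a b : V} (hab : a ≠ b) {φ : V → ℝ} (hφ : φ a - φ b = 1)
    (wt : ℕ → ℝ) (hwt : ∀ j, 0 ≤ wt j)
    (hscale : ∀ j, j < l → (scaleFamily G a j).Nonempty →
      0 < mscale G a j ∧ 2 * (Mscale G a j : ℝ) ≤ wt j * (mscale G a j : ℝ)^2) :
    1 ≤ 4 * ((∑ j ∈ Finset.range l, wt j) + 1) * dirichletEnergy G φ := by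
  classical
  have hab0 : φ b ≤ φ a := by linarith
  set n := Fintype.card V with hn
  set m := (vals φ a b).card - 1 with hmdef
  have hm2 : 2 ≤ (vals φ a b).card :=
    Finset.one_lt_card.2 ⟨φ b, phib_mem_vals hab0, φ a, phia_mem_vals hab0, by intro h; rw [h] at hφ; linarith⟩
  have hm1 : 1 ≤ m := by omega
  -- basic facts about the sets
  have hSa : ∀ k ∈ Finset.range m, a ∈ Sset φ a b k := by
    intro k _
    exact vIdx_le_phia hab0 (k+1)
  have hSb : ∀ k ∈ Finset.range m, b ∉ Sset φ a b k := by
    intro k hk hbS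
    have : vIdx φ a b 0 < vIdx φ a b (k+1) :=
      vIdx_strict hab0 (Nat.succ_pos k) (by have := Finset.mem_range.1 hk; omega)
    rw [vIdx_zero hab0] at this
    exact absurd hbS (not_le.2 this)
  have hXa : ∀ k ∈ Finset.range m, a ∈ Xset G φ a b k :=
    fun k hk => aa_mem_fillX (hSa k hk)
  have hXb : ∀ k ∈ Finset.range m, b ∉ Xset G φ a b k :=
    fun k hk => bb_not_mem_fillX (hSa k hk) (hSb k hk)
  have hXanti : ∀ k k' : ℕ, k ≤ k' → Xset G φ a b k' ⊆ Xset G φ a b k := by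
    intro k k' hkk
    apply fillX_mono
    intro x hx
    exact le_trans (vIdx_mono hab0 (by omega)) hx
  have hmemC : ∀ k ∈ Finset.range m, memC G (XFin G φ a b k) := by
    intro k hk
    refine ⟨⟨a, mem_XFin.2 (hXa k hk)⟩, ?_, ?_, ?_⟩
    · intro h
      exact (hXb k hk) (mem_XFin.1 (h ▸ Finset.mem_univ b))
    · rw [coe_XFin]; exact fillX_connected hG (hSa k hk)
    · rw [coe_XFin]; exact fillX_compl_connected (hSa k hk) (hSb k hk)
  have hcard1 : ∀ k ∈ Finset.range m, 1 ≤ (XFin G φ a b k).card :=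
    fun k hk => Finset.card_pos.2 ⟨a, mem_XFin.2 (hXa k hk)⟩
  have hclsle : ∀ k, clsIdx G φ a b l k ≤ l := fun k => Nat.findGreatest_le l
  have hcls_eq : ∀ k, clsIdx G φ a b l k =
      Nat.findGreatest (fun j => (XFin G φ a b k).card ≤ n / 2 ^ j) l := fun k => rfl
  have hclsub : ∀ k, (XFin G φ a b k).card ≤ n / 2 ^ (clsIdx G φ a b l k) := by
    intro k
    rw [hcls_eq k]
    exact Nat.findGreatest_spec (P := fun j => (XFin G φ a b k).card ≤ n / 2 ^ j)
      (Nat.zero_le l) (by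
        simp only [pow_zero, Nat.div_one]
        rw [hn, ← Finset.card_univ]
        exact Finset.card_le_univ _)
  have hclslb : ∀ k ∈ Finset.range m, n / 2 ^ (clsIdx G φ a b l k + 1) < (XFin G φ a b k).card := by
    intro k hk
    by_cases hc : clsIdx G φ a b l k = l
    · rw [hc]
      have h0 : n / 2 ^ (l+1) = 0 := Nat.div_eq_of_lt hn2
      rw [h0]
      exact hcard1 k hk
    · have hlt : clsIdx G φ a b l k < l := lt_of_le_of_ne (hclsle k) hc
      rw [hcls_eq k] at hlt ⊢
      have hng := Nat.findGreatest_is_greatest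
        (P := fun j => (XFin G φ a b k).card ≤ n / 2 ^ j) (n := l)
        (Nat.lt_succ_self _) (by omega)
      exact not_le.1 (by simpa using hng)
  have hfam : ∀ k ∈ Finset.range m, XFin G φ a b k ∈ scaleFamily G a (clsIdx G φ a b l k) :=
    fun k hk => ⟨hmemC k hk, mem_XFin.2 (hXa k hk), hclslb k hk, hclsub k⟩
  have hsingk : ∀ k ∈ Finset.range m, clsIdx G φ a b l k = l → XFin G φ a b k = {a} := by
    intro k hk hkl
    have hdiv : n / 2 ^ l = 1 := Nat.div_eq_of_lt_le (by simpa using hn1) (by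
      have : (1+1) * 2 ^ l = 2 ^ (l+1) := by ring
      omega)
    have hle1 : (XFin G φ a b k).card ≤ 1 := by
      have := hclsub k; rw [hkl, hdiv] at this; exact this
    refine Finset.eq_singleton_iff_unique_mem.2 ⟨mem_XFin.2 (hXa k hk), ?_⟩
    intro x hx
    exact Finset.card_le_one.1 hle1 x hx a (mem_XFin.2 (hXa k hk))
  have horient : ∀ k ∈ Finset.range m, ∀ p ∈ BdP G φ a b k,
      φ p.2 < vIdx φ a b (k+1) ∧ vIdx φ a b (k+1) ≤ φ p.1 := by
    intro k hk p hp
    obtain ⟨hadj, hx, hy⟩ := (Finset.mem_filter.1 hp).2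
    obtain ⟨h1, h2⟩ := fillX_bdry hadj hx hy
    exact ⟨not_le.1 h2, h1⟩
  have hlamnn : ∀ k, 0 ≤ lamk φ a b k := by
    intro k
    simp only [lamk, sub_nonneg]
    exact vIdx_mono hab0 (Nat.le_succ k)
  have hBdsub : ∀ k, BdP G φ a b k ⊆ adjP G := by
    intro k p hp
    exact Finset.mem_filter.2 ⟨Finset.mem_univ p, (Finset.mem_filter.1 hp).2.1⟩
  have hbdry_eq : ∀ k, (BdP G φ a b k).card = bdryCard G (XFin G φ a b k) := by
    intro k
    unfold bdryCard BdP
    congr 1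
    apply Finset.filter_congr
    intro p _
    simp [mem_XFin]
  have hdltnn : ∀ j, 0 ≤ dlt G φ a b l j :=
    fun j => Finset.sum_nonneg fun k _ => hlamnn k
  have hellnn : ∀ j p, 0 ≤ ell G φ a b l j p := by
    intro j p
    apply Finset.sum_nonneg
    intro k _
    split
    · exact hlamnn k
    · exact le_refl 0
  have hAnn : ∀ j, 0 ≤ Asum G φ a b l j :=
    fun j => Finset.sum_nonneg fun p _ => sq_nonneg _
  -- partition of unity
  have hpart : ∑ j ∈ Finset.range (l+1), dlt G φ a b l j = 1 := by
    have hmaps : ∀ k ∈ Finset.range m, clsIdx G φ a b l k ∈ Finset.range (l+1) :=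
      fun k _ => Finset.mem_range.2 (Nat.lt_succ_of_le (hclsle k))
    have := Finset.sum_fiberwise_of_maps_to hmaps (lamk φ a b)
    have h2 : ∑ j ∈ Finset.range (l+1), dlt G φ a b l j = ∑ k ∈ Finset.range m, lamk φ a b k := this
    rw [h2]
    have h3 : ∑ k ∈ Finset.range m, lamk φ a b k = vIdx φ a b m - vIdx φ a b 0 :=
      Finset.sum_range_sub (vIdx φ a b) m
    rw [h3, hmdef, vIdx_last hab0, vIdx_zero hab0]
    linarith
  -- the per-scale estimate
  have hkey : ∀ j ∈ Finset.range l, (dlt G φ a b l j)^2 ≤ wt j * Asum G φ a b l j := by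
    intro j hj
    have hjl : j < l := Finset.mem_range.1 hj
    by_cases hKe : (Kfib G φ a b l j).Nonempty
    · set k0 := (Kfib G φ a b l j).min' hKe with hk0def
      have hk0K : k0 ∈ Kfib G φ a b l j := Finset.min'_mem _ hKe
      have hk0m : k0 ∈ Finset.range m := (Finset.mem_filter.1 hk0K).1
      have hk0c : clsIdx G φ a b l k0 = j := (Finset.mem_filter.1 hk0K).2
      have hfam0 : XFin G φ a b k0 ∈ scaleFamily G a j := hk0c ▸ hfam k0 hk0m
      obtain ⟨hmpos, hMw⟩ := hscale j hjl ⟨_, hfam0⟩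
      have hfamk : ∀ k ∈ Kfib G φ a b l j, XFin G φ a b k ∈ scaleFamily G a j := by
        intro k hk
        have := (Finset.mem_filter.1 hk).2
        exact this ▸ hfam k (Finset.mem_filter.1 hk).1
      have hmle : ∀ k ∈ Kfib G φ a b l j, mscale G a j ≤ (BdP G φ a b k).card := by
        intro k hk
        rw [hbdry_eq k]
        exact Nat.sInf_le ⟨XFin G φ a b k, hfamk k hk, rfl⟩
      have step2 : (mscale G a j : ℝ) * dlt G φ a b l j ≤
          ∑ k ∈ Kfib G φ a b l j, lamk φ a b k * ((BdP G φ a b k).card : ℝ) := by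
        rw [dlt, Finset.mul_sum]
        apply Finset.sum_le_sum
        intro k hk
        rw [mul_comm]
        apply mul_le_mul_of_nonneg_left _ (hlamnn k)
        exact_mod_cast hmle k hk
      have step3 : ∑ k ∈ Kfib G φ a b l j, lamk φ a b k * ((BdP G φ a b k).card : ℝ) =
          ∑ p ∈ adjP G, ell G φ a b l j p := by
        unfold ell
        rw [Finset.sum_comm]
        apply Finset.sum_congr rfl
        intro k _
        rw [Finset.sum_ite_mem, Finset.inter_eq_right.2 (hBdsub k), Finset.sum_const,
          nsmul_eq_mul, mul_comm]
      set T : Finset (V × V) := (adjP G).filter (fun p => p.1 ∈ Xset G φ a b k0) with hTdef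
      have step4 : ∑ p ∈ adjP G, ell G φ a b l j p = ∑ p ∈ T, ell G φ a b l j p := by
        symm
        apply Finset.sum_subset (Finset.filter_subset _ _)
        intro p hp hpT
        apply Finset.sum_eq_zero
        intro k hk
        rw [if_neg]
        intro hpBd
        apply hpT
        refine Finset.mem_filter.2 ⟨hp, ?_⟩
        have hk0k : k0 ≤ k := Finset.min'_le _ _ hk
        exact hXanti k0 k hk0k (Finset.mem_filter.1 hpBd).2.2.1
      have step5 : (∑ p ∈ T, ell G φ a b l j p)^2 ≤
          (T.card : ℝ) * ∑ p ∈ T, (ell G φ a b l j p)^2 := by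
        have := Finset.sum_mul_sq_le_sq_mul_sq T (fun _ => (1:ℝ)) (ell G φ a b l j)
        simpa using this
      have step6 : ∑ p ∈ T, (ell G φ a b l j p)^2 ≤ Asum G φ a b l j :=
        Finset.sum_le_sum_of_subset_of_nonneg (Finset.filter_subset _ _)
          (fun p _ _ => sq_nonneg _)
      have step7 : (T.card : ℝ) ≤ 2 * (Mscale G a j : ℝ) := by
        have hsplit := Finset.card_filter_add_card_filter_not
          (s := T) (p := fun p : V × V => p.2 ∈ Xset G φ a b k0)
        have hinT : T.filter (fun p : V × V => p.2 ∈ Xset G φ a b k0) =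
            Finset.univ.filter (fun p : V × V =>
              G.Adj p.1 p.2 ∧ p.1 ∈ XFin G φ a b k0 ∧ p.2 ∈ XFin G φ a b k0) := by
          ext p
          simp only [hTdef, adjP, Finset.mem_filter, Finset.mem_univ, true_and, mem_XFin]
          tauto
        have houtT : T.filter (fun p : V × V => ¬ p.2 ∈ Xset G φ a b k0) =
            Finset.univ.filter (fun p : V × V =>
              G.Adj p.1 p.2 ∧ p.1 ∈ XFin G φ a b k0 ∧ p.2 ∉ XFin G φ a b k0) := by
          ext p
          simp only [hTdef, adjP, Finset.mem_filter, Finset.mem_univ, true_and, mem_XFin]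
          tauto
        have hinE : (Finset.univ.filter (fun p : V × V =>
              G.Adj p.1 p.2 ∧ p.1 ∈ XFin G φ a b k0 ∧ p.2 ∈ XFin G φ a b k0)).card / 2 =
            inEdgesCard G (XFin G φ a b k0) := rfl
        have houtE : (Finset.univ.filter (fun p : V × V =>
              G.Adj p.1 p.2 ∧ p.1 ∈ XFin G φ a b k0 ∧ p.2 ∉ XFin G φ a b k0)).card =
            bdryCard G (XFin G φ a b k0) := rfl
        have hMle : inEdgesCard G (XFin G φ a b k0) + bdryCard G (XFin G φ a b k0) ≤
            Mscale G a j := by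
          apply le_csSup
          · exact ((Set.toFinite (scaleFamily G a j)).image _).bddAbove
          · exact ⟨XFin G φ a b k0, hfam0, rfl⟩
        have hbpos : 1 ≤ bdryCard G (XFin G φ a b k0) := by
          have h1 : mscale G a j ≤ bdryCard G (XFin G φ a b k0) :=
            Nat.sInf_le ⟨XFin G φ a b k0, hfam0, rfl⟩
          omega
        have hnat : T.card ≤ 2 * Mscale G a j := by
          set cIn := (Finset.univ.filter (fun p : V × V =>
              G.Adj p.1 p.2 ∧ p.1 ∈ XFin G φ a b k0 ∧ p.2 ∈ XFin G φ a b k0)).card with hcIn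
          have hdm := Nat.div_add_mod cIn 2
          have hml : cIn % 2 < 2 := Nat.mod_lt _ (by norm_num)
          rw [hinT, houtT] at hsplit
          rw [← hinE] at hMle
          rw [houtE] at hsplit
          omega
        exact_mod_cast hnat
      -- combine
      have h0 : (mscale G a j : ℝ) * dlt G φ a b l j ≤ ∑ p ∈ T, ell G φ a b l j p := by
        rw [← step4, ← step3]; exact step2
      have h0nn : 0 ≤ (mscale G a j : ℝ) * dlt G φ a b l j :=
        mul_nonneg (Nat.cast_nonneg _) (hdltnn j)
      have h1 : ((mscale G a j : ℝ) * dlt G φ a b l j)^2 ≤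
          (2 * (Mscale G a j : ℝ)) * Asum G φ a b l j := by
        calc ((mscale G a j : ℝ) * dlt G φ a b l j)^2
            ≤ (∑ p ∈ T, ell G φ a b l j p)^2 := by
              apply pow_le_pow_left₀ h0nn h0
          _ ≤ (T.card : ℝ) * ∑ p ∈ T, (ell G φ a b l j p)^2 := step5
          _ ≤ (2 * (Mscale G a j : ℝ)) * Asum G φ a b l j := by
              apply mul_le_mul step7 step6 (Finset.sum_nonneg fun p _ => sq_nonneg _)
                (by positivity)
      have hmR : (0:ℝ) < (mscale G a j : ℝ) := by exact_mod_cast hmpos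
      have h2 : dlt G φ a b l j ^2 * ((mscale G a j : ℝ))^2 ≤
          (wt j * Asum G φ a b l j) * ((mscale G a j : ℝ))^2 := by
        calc dlt G φ a b l j ^2 * ((mscale G a j : ℝ))^2
            = ((mscale G a j : ℝ) * dlt G φ a b l j)^2 := by ring
          _ ≤ (2 * (Mscale G a j : ℝ)) * Asum G φ a b l j := h1
          _ ≤ (wt j * ((mscale G a j : ℝ))^2) * Asum G φ a b l j :=
              mul_le_mul_of_nonneg_right hMw (hAnn j)
          _ = (wt j * Asum G φ a b l j) * ((mscale G a j : ℝ))^2 := by ring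
      exact le_of_mul_le_mul_right h2 (by positivity)
    · rw [Finset.not_nonempty_iff_eq_empty] at hKe
      rw [dlt, hKe, Finset.sum_empty]
      have := mul_nonneg (hwt j) (hAnn j)
      simpa using this
  -- the total quadratic mass is at most twice the energy
  have hA2E : ∑ j ∈ Finset.range l, Asum G φ a b l j ≤ 2 * dirichletEnergy G φ := by
    unfold Asum
    rw [Finset.sum_comm]
    calc ∑ p ∈ adjP G, ∑ j ∈ Finset.range l, (ell G φ a b l j p)^2
        ≤ ∑ p ∈ adjP G, (φ p.1 - φ p.2)^2 := by
          apply Finset.sum_le_sum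
          intro p hp
          set Sp := ∑ j ∈ Finset.range l, ell G φ a b l j p with hSpdef
          have hSpnn : 0 ≤ Sp := Finset.sum_nonneg fun j _ => hellnn j p
          have hLsum : Sp ≤ max (φ p.1 - φ p.2) 0 := by
            have hfib : Sp = ∑ k ∈ (Finset.range m).filter
                (fun k => clsIdx G φ a b l k < l),
                (if p ∈ BdP G φ a b k then lamk φ a b k else 0) := by
              rw [hSpdef]
              have hmaps : ∀ k ∈ (Finset.range m).filter (fun k => clsIdx G φ a b l k < l),
                  clsIdx G φ a b l k ∈ Finset.range l :=
                fun k hk => Finset.mem_range.2 (Finset.mem_filter.1 hk).2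
              rw [← Finset.sum_fiberwise_of_maps_to hmaps
                (fun k => if p ∈ BdP G φ a b k then lamk φ a b k else 0)]
              apply Finset.sum_congr rfl
              intro j hj
              have hjl : j < l := Finset.mem_range.1 hj
              unfold ell Kfib
              apply Finset.sum_congr _ (fun _ _ => rfl)
              rw [Finset.filter_filter]
              apply Finset.filter_congr
              intro k _
              constructor
              · intro h; exact ⟨by omega, h⟩
              · intro h; exact h.2
            rw [hfib, ← Finset.sum_filter]
            apply coarea hab0 ⟨p.2, rfl⟩
            · intro k hk
              exact (Finset.mem_filter.1 (Finset.mem_filter.1 hk).1).1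
            · intro k hk
              have hkm : k ∈ Finset.range m :=
                (Finset.mem_filter.1 (Finset.mem_filter.1 hk).1).1
              exact horient k hkm p (Finset.mem_filter.1 hk).2
          have hsq : Sp^2 ≤ (φ p.1 - φ p.2)^2 := by
            have h1 : Sp ≤ |φ p.1 - φ p.2| :=
              hLsum.trans (max_le (le_abs_self _) (abs_nonneg _))
            calc Sp^2 ≤ |φ p.1 - φ p.2|^2 := pow_le_pow_left₀ hSpnn h1 2
              _ = (φ p.1 - φ p.2)^2 := sq_abs _
          calc ∑ j ∈ Finset.range l, (ell G φ a b l j p)^2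
              ≤ ∑ j ∈ Finset.range l, ell G φ a b l j p * Sp := by
                apply Finset.sum_le_sum
                intro j hj
                rw [sq]
                apply mul_le_mul_of_nonneg_left _ (hellnn j p)
                exact Finset.single_le_sum (fun j _ => hellnn j p) hj
            _ = Sp * Sp := by rw [← Finset.sum_mul]
            _ = Sp^2 := (sq Sp).symm
            _ ≤ (φ p.1 - φ p.2)^2 := hsq
      _ = 2 * dirichletEnergy G φ := sum_pairs_eq φ
  -- the singleton scale
  have hsingle : dlt G φ a b l l ≤ Real.sqrt (2 * dirichletEnergy G φ) := by
    obtain ⟨v0, hv0⟩ : ∃ v0, G.Adj a v0 := by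
      obtain ⟨W⟩ := hG.preconnected a b
      cases W with
      | nil => exact absurd rfl hab
      | cons h p => exact ⟨_, h⟩
    obtain ⟨ws, hwsmem, hwsmax⟩ := Finset.exists_max_image
      (Finset.univ.filter (fun y => G.Adj a y)) φ ⟨v0, Finset.mem_filter.2 ⟨Finset.mem_univ _, hv0⟩⟩
    have hadjws : G.Adj a ws := (Finset.mem_filter.1 hwsmem).2
    have hKsub : ∀ k ∈ Kfib G φ a b l l,
        φ ws < vIdx φ a b (k+1) ∧ vIdx φ a b (k+1) ≤ φ a := by
      intro k hk
      have hkm : k ∈ Finset.range m := (Finset.mem_filter.1 hk).1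
      have hkl : clsIdx G φ a b l k = l := (Finset.mem_filter.1 hk).2
      have hXk : XFin G φ a b k = {a} := hsingk k hkm hkl
      have haX : a ∈ Xset G φ a b k := hXa k hkm
      have hwsX : ws ∉ Xset G φ a b k := by
        intro hws
        have : ws ∈ XFin G φ a b k := mem_XFin.2 hws
        rw [hXk, Finset.mem_singleton] at this
        exact G.irrefl (this ▸ hadjws)
      have hpBd : ((a, ws) : V × V) ∈ BdP G φ a b k :=
        Finset.mem_filter.2 ⟨Finset.mem_univ _, hadjws, haX, hwsX⟩
      exact horient k hkm (a, ws) hpBd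
    have h1 : dlt G φ a b l l ≤ max (φ a - φ ws) 0 := by
      rw [dlt]
      apply coarea hab0 ⟨ws, rfl⟩
      · intro k hk; exact (Finset.mem_filter.1 hk).1
      · exact hKsub
    have h2 : (max (φ a - φ ws) 0)^2 ≤ 2 * dirichletEnergy G φ := by
      have hmem : ((a, ws) : V × V) ∈ adjP G :=
        Finset.mem_filter.2 ⟨Finset.mem_univ _, hadjws⟩
      have h3 : (φ a - φ ws)^2 ≤ ∑ p ∈ adjP G, (φ p.1 - φ p.2)^2 :=
        Finset.single_le_sum (f := fun p : V × V => (φ p.1 - φ p.2)^2)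
          (fun p _ => sq_nonneg _) hmem
      have h4 : (max (φ a - φ ws) 0)^2 ≤ (φ a - φ ws)^2 := by
        have := max_le (le_abs_self (φ a - φ ws)) (abs_nonneg (φ a - φ ws))
        calc (max (φ a - φ ws) 0)^2 ≤ |φ a - φ ws|^2 :=
              pow_le_pow_left₀ (le_max_right _ _) this 2
          _ = (φ a - φ ws)^2 := sq_abs _
      rw [← sum_pairs_eq φ]
      exact h4.trans h3
    refine h1.trans ?_
    exact (Real.le_sqrt (le_max_right _ _) (by
      have := dirichletEnergy_nonneg (G := G) φ; linarith)).2 h2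
  -- assembly
  set E := dirichletEnergy G φ with hEdef
  have hEnn : 0 ≤ E := dirichletEnergy_nonneg φ
  set W := ∑ j ∈ Finset.range l, wt j with hWdef
  have hWnn : 0 ≤ W := Finset.sum_nonneg fun j _ => hwt j
  have hsum1 : 1 - dlt G φ a b l l ≤ ∑ j ∈ Finset.range l, dlt G φ a b l j := by
    have := Finset.sum_range_succ (dlt G φ a b l) l
    rw [hpart] at this  -- careful direction
    linarith [this]
  have hCS : ∑ j ∈ Finset.range l, dlt G φ a b l j ≤
      Real.sqrt W * Real.sqrt (2 * E) := by
    have hperj : ∀ j ∈ Finset.range l, dlt G φ a b l j ≤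
        Real.sqrt (wt j) * Real.sqrt (Asum G φ a b l j) := by
      intro j hj
      rw [← Real.sqrt_mul (hwt j)]
      exact (Real.le_sqrt (hdltnn j) (mul_nonneg (hwt j) (hAnn j))).2 (hkey j hj)
    have h1 : ∑ j ∈ Finset.range l, dlt G φ a b l j ≤
        ∑ j ∈ Finset.range l, Real.sqrt (wt j) * Real.sqrt (Asum G φ a b l j) :=
      Finset.sum_le_sum hperj
    have hCS2 := Finset.sum_mul_sq_le_sq_mul_sq (Finset.range l)
      (fun j => Real.sqrt (wt j)) (fun j => Real.sqrt (Asum G φ a b l j))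
    have hsq1 : ∑ j ∈ Finset.range l, (Real.sqrt (wt j))^2 = W := by
      rw [hWdef]; exact Finset.sum_congr rfl fun j _ => Real.sq_sqrt (hwt j)
    have hsq2 : ∑ j ∈ Finset.range l, (Real.sqrt (Asum G φ a b l j))^2 =
        ∑ j ∈ Finset.range l, Asum G φ a b l j := by
      exact Finset.sum_congr rfl fun j _ => Real.sq_sqrt (hAnn j)
    rw [hsq1, hsq2] at hCS2
    have h2 : ∑ j ∈ Finset.range l, Real.sqrt (wt j) * Real.sqrt (Asum G φ a b l j) ≤
        Real.sqrt (W * (2 * E)) := by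
      apply (Real.le_sqrt (Finset.sum_nonneg fun j _ =>
        mul_nonneg (Real.sqrt_nonneg _) (Real.sqrt_nonneg _))
        (mul_nonneg hWnn (by linarith))).2
      calc (∑ j ∈ Finset.range l, Real.sqrt (wt j) * Real.sqrt (Asum G φ a b l j))^2
          ≤ W * ∑ j ∈ Finset.range l, Asum G φ a b l j := hCS2
        _ ≤ W * (2 * E) := mul_le_mul_of_nonneg_left hA2E hWnn
    rw [Real.sqrt_mul hWnn] at h2
    exact h1.trans h2
  have hmain : 1 ≤ Real.sqrt W * Real.sqrt (2 * E) + Real.sqrt (2 * E) := by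
    linarith [hsingle, hsum1, hCS]
  set s := Real.sqrt W with hsdef
  set u := Real.sqrt (2 * E) with hudef
  have hs2 : s^2 = W := Real.sq_sqrt hWnn
  have hu2 : u^2 = 2 * E := Real.sq_sqrt (by linarith)
  have hsnn : 0 ≤ s := Real.sqrt_nonneg _
  have hunn : 0 ≤ u := Real.sqrt_nonneg _
  nlinarith [mul_self_le_mul_self (zero_le_one) hmain,
    mul_nonneg (sq_nonneg (s-1)) (sq_nonneg u), hs2, hu2]

end core

/-- **Quadratic energy bound for graphs with `ℤ^d`-isoperimetry.**
Let `d ≥ 2`, `C, c > 0`.  There is `c' = c'(d, C, c) > 0` such that: for every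
finite connected graph `G` with `2^l ≤ |V(G)| < 2^{l+1}` and vertices `a, b`
such that, whenever defined, `M_{l-i}(v) ≤ C 2^i` and
`m_{l-i}(v) ≥ c 2^{((d-1)/d) i}` for `1 ≤ i ≤ l`, `v ∈ {a, b}`, one has
`inf {∑_e (∇_e φ)² : φ(a) - φ(b) = 1} ≥ c'/l` if `d = 2` and `≥ c'` if `d ≥ 3`. -/
theorem quadratic_energy_estimate (d : ℕ) (hd : 2 ≤ d) (C c : ℝ)
    (hC : 0 < C) (hc : 0 < c) :
    ∃ c' : ℝ, 0 < c' ∧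
      ∀ (V : Type) (_ : Fintype V) (G : SimpleGraph V), G.Connected →
      ∀ l : ℕ, 2 ^ l ≤ Fintype.card V → Fintype.card V < 2 ^ (l + 1) →
      ∀ a b : V, a ≠ b →
      (∀ i : ℕ, 1 ≤ i → i ≤ l → ∀ v ∈ ({a, b} : Set V),
        (scaleFamily G v (l - i)).Nonempty →
          (Mscale G v (l - i) : ℝ) ≤ C * 2 ^ i ∧
          c * (2 : ℝ) ^ (((d - 1 : ℝ) / d) * i) ≤ (mscale G v (l - i) : ℝ)) →
      ∀ φ : V → ℝ, φ a - φ b = 1 →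
        (d = 2 → c' / l ≤ dirichletEnergy G φ) ∧
        (3 ≤ d → c' ≤ dirichletEnergy G φ) := by
  classical
  refine ⟨1/(4*(8*C/c^2+1)), by positivity, ?_⟩
  intro V instV G hG l hn1 hn2 a b hab hyp φ hφ
  have hcV : 1 < Fintype.card V := Fintype.one_lt_card_iff_nontrivial.mpr ⟨⟨a, b, hab⟩⟩
  have hl : 1 ≤ l := by
    rcases Nat.eq_zero_or_pos l with h0 | h1
    · subst h0; norm_num at hn2; omega
    · exact h1
  set wt : ℕ → ℝ :=
    fun j => (2*C/c^2) * (2:ℝ) ^ ((1 - 2*(((d:ℝ)-1)/d)) * ((l - j : ℕ) : ℝ)) with hwtdef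
  have hwtnn : ∀ j, 0 ≤ wt j := by
    intro j
    simp only [hwtdef]
    positivity
  have hscale : ∀ j, j < l → (scaleFamily G a j).Nonempty →
      0 < mscale G a j ∧ 2 * (Mscale G a j : ℝ) ≤ wt j * (mscale G a j : ℝ)^2 := by
    intro j hjl hne
    have hj' : l - (l - j) = j := by omega
    have H := hyp (l - j) (by omega) (by omega) a (Set.mem_insert a {b}) (by rw [hj']; exact hne)
    rw [hj'] at H
    obtain ⟨hM, hm⟩ := H
    set x : ℝ := ((l - j : ℕ) : ℝ) with hx
    set β : ℝ := ((d:ℝ)-1)/d with hβ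
    have hq : (0:ℝ) < (2:ℝ) ^ (β * x) := Real.rpow_pos_of_pos (by norm_num) _
    have hm' : c * (2:ℝ)^(β*x) ≤ (mscale G a j : ℝ) := by
      first
      | exact hm
      | (convert hm using 3; ring)
    have hmpos : (0:ℝ) < (mscale G a j : ℝ) := lt_of_lt_of_le (by positivity) hm'
    refine ⟨by exact_mod_cast hmpos, ?_⟩
    have hsq : (c * (2:ℝ)^(β*x))^2 ≤ ((mscale G a j : ℝ))^2 :=
      pow_le_pow_left₀ (by positivity) hm' 2
    have hkey : ((2*C/c^2) * (2:ℝ)^((1-2*β)*x)) * (c * (2:ℝ)^(β*x))^2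
        = 2 * (C * 2^(l-j)) := by
      have hc2 : (c:ℝ)^2 ≠ 0 := by positivity
      have e1 : ((2:ℝ)^(β*x))^2 = (2:ℝ)^(β*x + β*x) := by
        rw [Real.rpow_add (by norm_num)]; ring
      have e2 : (2:ℝ)^((1-2*β)*x) * (2:ℝ)^(β*x + β*x) = (2:ℝ)^(x) := by
        rw [← Real.rpow_add (by norm_num)]
        congr 1
        ring
      have e3 : (2:ℝ)^(x) = (2:ℝ)^((l-j : ℕ)) := by
        rw [hx, Real.rpow_natCast]
      calc ((2*C/c^2) * (2:ℝ)^((1-2*β)*x)) * (c * (2:ℝ)^(β*x))^2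
          = (2*C) * (c^2/c^2) * ((2:ℝ)^((1-2*β)*x) * ((2:ℝ)^(β*x))^2) := by ring
        _ = (2*C) * ((2:ℝ)^((1-2*β)*x) * ((2:ℝ)^(β*x))^2) := by
            rw [div_self hc2, mul_one]
        _ = (2*C) * (2:ℝ)^(x) := by rw [e1, e2]
        _ = 2 * (C * 2^(l-j)) := by rw [e3]; ring
    have hwtj : wt j = (2*C/c^2) * (2:ℝ)^((1-2*β)*x) := by
      simp only [hwtdef, hβ, hx]
    rw [hwtj]
    calc 2 * (Mscale G a j : ℝ) ≤ 2 * (C * 2^(l-j)) := by linarith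
      _ = ((2*C/c^2) * (2:ℝ)^((1-2*β)*x)) * (c * (2:ℝ)^(β*x))^2 := hkey.symm
      _ ≤ ((2*C/c^2) * (2:ℝ)^((1-2*β)*x)) * ((mscale G a j : ℝ))^2 := by
          apply mul_le_mul_of_nonneg_left hsq
          positivity
  have hcore := energy_core hG l hl hn1 hn2 hab hφ wt hwtnn hscale
  have hE : 0 ≤ dirichletEnergy G φ := dirichletEnergy_nonneg φ
  set E := dirichletEnergy G φ with hEdef
  constructor
  · -- d = 2
    intro hd2
    have hβ0 : (1 - 2*(((d:ℝ)-1)/(d:ℝ))) = 0 := by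
      rw [hd2]; norm_num
    have hsum : ∑ j ∈ Finset.range l, wt j = l * (2*C/c^2) := by
      simp only [hwtdef, hβ0, zero_mul, Real.rpow_zero, mul_one]
      rw [Finset.sum_const, Finset.card_range, nsmul_eq_mul]
    rw [hsum] at hcore
    have hl1 : (1:ℝ) ≤ (l:ℝ) := by exact_mod_cast hl
    have hlpos : (0:ℝ) < (l:ℝ) := by linarith
    rw [div_div, div_le_iff₀ (by positivity)]
    have hKnn : (0:ℝ) ≤ C/c^2 := by positivity
    have h8 : E * (4*(8*C/c^2+1)*(l:ℝ)) =
        4*((l:ℝ)*(2*C/c^2)+1)*E + (24*(C/c^2))*(E*(l:ℝ)) + 4*(E*((l:ℝ)-1)) := by ring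
    rw [h8]
    have hp1 : 0 ≤ (24*(C/c^2))*(E*(l:ℝ)) := by
      apply mul_nonneg (by positivity)
      exact mul_nonneg hE hlpos.le
    have hp2 : 0 ≤ 4*(E*((l:ℝ)-1)) := by
      apply mul_nonneg (by norm_num)
      exact mul_nonneg hE (by linarith)
    linarith [hcore]
  · -- d ≥ 3
    intro hd3
    have hd3R : (3:ℝ) ≤ (d:ℝ) := by exact_mod_cast hd3
    have hdpos : (0:ℝ) < (d:ℝ) := by linarith
    have hWle : ∑ j ∈ Finset.range l, wt j ≤ 8*C/c^2 := by
      set t : ℝ := (2:ℝ) ^ (-(1/3) : ℝ) with htdef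
      have ht0 : 0 < t := Real.rpow_pos_of_pos (by norm_num) _
      have ht1 : t < 1 := Real.rpow_lt_one_of_one_lt_of_neg (by norm_num) (by norm_num)
      have hexp : (1 - 2*(((d:ℝ)-1)/d)) ≤ -(1/3) := by
        rw [show (1 - 2*(((d:ℝ)-1)/d)) = (2 - d)/d by field_simp; ring, div_le_iff₀ hdpos]
        nlinarith
      have hterm : ∀ j ∈ Finset.range l, wt j ≤ (2*C/c^2) * t^(l-j) := by
        intro j hj
        simp only [hwtdef]
        apply mul_le_mul_of_nonneg_left _ (by positivity)
        have h1 : (1 - 2*(((d:ℝ)-1)/d)) * ((l - j : ℕ) : ℝ) ≤ (-(1/3)) * ((l - j : ℕ) : ℝ) :=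
          mul_le_mul_of_nonneg_right hexp (Nat.cast_nonneg _)
        calc (2:ℝ) ^ ((1 - 2*(((d:ℝ)-1)/d)) * ((l - j : ℕ) : ℝ))
            ≤ (2:ℝ) ^ ((-(1/3)) * ((l - j : ℕ) : ℝ)) :=
              Real.rpow_le_rpow_of_exponent_le (by norm_num) h1
          _ = t^(l-j) := by
              rw [htdef, ← Real.rpow_natCast ((2:ℝ) ^ (-(1/3):ℝ)) (l-j),
                ← Real.rpow_mul (by norm_num)]
      calc ∑ j ∈ Finset.range l, wt j
          ≤ ∑ j ∈ Finset.range l, (2*C/c^2) * t^(l-j) := Finset.sum_le_sum hterm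
        _ = (2*C/c^2) * ∑ j ∈ Finset.range l, t^(l-j) := by rw [Finset.mul_sum]
        _ ≤ 8*C/c^2 := by
            have hre : ∑ j ∈ Finset.range l, t^(l-j) = ∑ j ∈ Finset.range l, t^(j+1) := by
              rw [← Finset.sum_range_reflect]
              apply Finset.sum_congr rfl
              intro j hj
              have h5 : l - (l - 1 - j) = j + 1 := by
                have := Finset.mem_range.1 hj; omega
              rw [h5]
            have hgeo : ∑ j ∈ Finset.range l, t^(j+1) ≤ t/(1-t) := geom_aux ht0.le ht1 l
            have ht45 : t ≤ 4/5 := by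
              have h3 : t^(3:ℕ) = 1/2 := by
                rw [htdef, ← Real.rpow_natCast ((2:ℝ) ^ (-(1/3):ℝ)) 3,
                  ← Real.rpow_mul (by norm_num)]
                norm_num
              apply le_of_pow_le_pow_left₀ (n := 3) (by norm_num) (by norm_num)
              rw [h3]
              norm_num
            have h6 : t/(1-t) ≤ 4 := by
              rw [div_le_iff₀ (by linarith)]
              linarith
            have h7 : ∑ j ∈ Finset.range l, t^(l-j) ≤ 4 := by
              rw [hre]; linarith
            calc (2*C/c^2) * ∑ j ∈ Finset.range l, t^(l-j)
                ≤ (2*C/c^2) * 4 := by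
                  apply mul_le_mul_of_nonneg_left h7 (by positivity)
              _ = 8*C/c^2 := by ring
    rw [div_le_iff₀ (by positivity : (0:ℝ) < 4*(8*C/c^2+1))]
    set W := ∑ j ∈ Finset.range l, wt j with hWdef
    have h8 : E * (4*(8*C/c^2+1)) = 4*(W+1)*E + 4*(E*(8*C/c^2 - W)) := by ring
    rw [h8]
    have hp1 : 0 ≤ 4*(E*(8*C/c^2 - W)) := by
      apply mul_nonneg (by norm_num)
      exact mul_nonneg hE (sub_nonneg.2 hWle)
    linarith [hcore]
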